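/- arXiv:math/0605452 — 3 statements merged into one kernel-verified Lean document; each statement's English description precedes it below -/
import Mathlib

section
/- Let P satisfy Assumption (A) with constants ρ ∈ (0,1), C0 < ∞ and function V. Then there exists a constant C ∈ (0,∞) such that for every k ≥ 1 and every n with a_k ≤ n < a_{k+1}, the law L^(n) of the chain with resampling from the past satisfies ⦀L^(n) − π⦀_V ≤ C ρ^{n−a_k} exp(−δ_k). -/
open MeasureTheory Filter
open scoped ENNReal
open scoped NNReal

namespace ResamplingFromThePast

variable {X : Type*} [MeasurableSpace X]

/-- `iter P n` is the `n`-step transition kernel `P^n` (acting on points, producing measures),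
with `P^0(x,·) = δ_x` and `P^{n+1}(x,·) = ∫ P^n(x,dy) P(y,·)`. -/
noncomputable def iter (P : X → Measure X) : ℕ → X → Measure X
  | 0 => fun x => Measure.dirac x
  | n + 1 => fun x => (iter P n x).bind P

/-- `u ρ a 1 = -a₁ log ρ` and `u ρ a k = log (a_k) - log (1/(1-ρ) + a_{k-1})` for `k ≥ 2`,
where `c = 1/(1-ρ)`. -/
noncomputable def u (ρ : ℝ) (a : ℕ → ℕ) : ℕ → ℝ
  | 0 => 0
  | 1 => -(a 1 : ℝ) * Real.log ρ
  | k + 2 => Real.log (a (k + 2) : ℝ) - Real.log (1 / (1 - ρ) + (a (k + 1) : ℝ))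

/-- `δ_k = Σ_{j=1}^k u_j`. -/
noncomputable def delta (ρ : ℝ) (a : ℕ → ℕ) (k : ℕ) : ℝ :=
  ∑ j ∈ Finset.Icc 1 k, u ρ a j

open Classical in
/-- `SW ρ a n = (∑_{j<n} W j, W n)` where `W` is the weighted `ρ`-sum recursion. -/
noncomputable def SW (ρ : ℝ) (a : ℕ → ℕ) : ℕ → ℝ × ℝ
  | 0 => (0, 1)
  | n + 1 =>
    ((SW ρ a n).1 + (SW ρ a n).2,
      if ∃ k, 1 ≤ k ∧ a k = n + 1 then ((SW ρ a n).1 + (SW ρ a n).2) / ((n : ℝ) + 1)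
      else ρ * (SW ρ a n).2)

noncomputable def W (ρ : ℝ) (a : ℕ → ℕ) (n : ℕ) : ℝ := (SW ρ a n).2

lemma W_zero (ρ : ℝ) (a : ℕ → ℕ) : W ρ a 0 = 1 := rfl

lemma SW_fst (ρ : ℝ) (a : ℕ → ℕ) : ∀ n, (SW ρ a n).1 = ∑ j ∈ Finset.range n, W ρ a j
  | 0 => by simp [SW]
  | n + 1 => by
      rw [Finset.sum_range_succ, ← SW_fst ρ a n]
      simp [SW, W]

lemma W_succ_res (ρ : ℝ) (a : ℕ → ℕ) (n : ℕ) (h : ∃ k, 1 ≤ k ∧ a k = n + 1) :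
    W ρ a (n + 1) = (∑ j ∈ Finset.range (n + 1), W ρ a j) / ((n : ℝ) + 1) := by
  rw [← SW_fst]
  simp [W, SW, h]

lemma W_succ_plain (ρ : ℝ) (a : ℕ → ℕ) (n : ℕ) (h : ¬∃ k, 1 ≤ k ∧ a k = n + 1) :
    W ρ a (n + 1) = ρ * W ρ a n := by
  simp [W, SW, h]

lemma W_pos (ρ : ℝ) (a : ℕ → ℕ) (hρ : 0 < ρ) : ∀ n, 0 < W ρ a n := by
  intro n
  induction n using Nat.strong_induction_on with
  | _ n ih =>
    match n with
    | 0 => exact one_pos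
    | n + 1 =>
      by_cases h : ∃ k, 1 ≤ k ∧ a k = n + 1
      · rw [W_succ_res ρ a n h]
        apply div_pos
        · exact Finset.sum_pos (fun j hj => ih j (by simpa using Finset.mem_range.mp hj))
            ⟨0, by simp⟩
        · positivity
      · rw [W_succ_plain ρ a n h]
        exact mul_pos hρ (ih n (by omega))

lemma a_mono (a : ℕ → ℕ) (hamono : ∀ k, 1 ≤ k → a k < a (k + 1)) :
    ∀ i j, 1 ≤ i → i < j → a i < a j := by
  intro i j hi hij
  induction j with
  | zero => omega
  | succ j ih =>
    rcases Nat.lt_succ_iff_lt_or_eq.mp hij with h | h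
    · exact lt_trans (ih h) (hamono j (by omega))
    · subst h; exact hamono i hi

lemma a_le (a : ℕ → ℕ) (hamono : ∀ k, 1 ≤ k → a k < a (k + 1)) :
    ∀ i j, 1 ≤ i → i ≤ j → a i ≤ a j := by
  intro i j hi hij
  rcases eq_or_lt_of_le hij with rfl | h
  · exact le_rfl
  · exact (a_mono a hamono i j hi h).le

/-- there is no resampling time strictly between `a k` and `a (k+1)`. -/
lemma no_res_between (a : ℕ → ℕ) (hamono : ∀ k, 1 ≤ k → a k < a (k + 1))
    (k : ℕ) (hk : 1 ≤ k) (m : ℕ) (h1 : a k < m) (h2 : m < a (k + 1)) :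
    ¬∃ j, 1 ≤ j ∧ a j = m := by
  rintro ⟨j, hj1, rfl⟩
  rcases le_or_gt j k with h | h
  · exact absurd (a_le a hamono j k hj1 h) (by omega)
  · exact absurd (a_le a hamono (k + 1) j (by omega) h) (by omega)

lemma no_res_below (a : ℕ → ℕ) (hamono : ∀ k, 1 ≤ k → a k < a (k + 1))
    (m : ℕ) (h1 : m < a 1) : ¬∃ j, 1 ≤ j ∧ a j = m := by
  rintro ⟨j, hj1, rfl⟩
  exact absurd (a_le a hamono 1 j le_rfl hj1) (by omega)

lemma W_no_res (ρ : ℝ) (a : ℕ → ℕ) (hamono : ∀ k, 1 ≤ k → a k < a (k + 1))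
    (k : ℕ) (hk : 1 ≤ k) :
    ∀ d, a k + d < a (k + 1) → W ρ a (a k + d) = ρ ^ d * W ρ a (a k) := by
  intro d
  induction d with
  | zero => intro _; simp
  | succ d ih =>
    intro hd
    have h1 : a k + d < a (k + 1) := by omega
    have hres : ¬∃ j, 1 ≤ j ∧ a j = a k + d + 1 :=
      no_res_between a hamono k hk _ (by omega) (by omega)
    have : a k + (d + 1) = (a k + d) + 1 := by omega
    rw [this, W_succ_plain ρ a (a k + d) hres, ih h1]
    ring

lemma W_below_a1 (ρ : ℝ) (a : ℕ → ℕ) (hamono : ∀ k, 1 ≤ k → a k < a (k + 1)) :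
    ∀ j, j < a 1 → W ρ a j = ρ ^ j := by
  intro j
  induction j with
  | zero => intro _; simp [W_zero]
  | succ j ih =>
    intro hj
    rw [W_succ_plain ρ a j (no_res_below a hamono (j + 1) hj), ih (by omega)]
    ring

lemma W_res_eq (ρ : ℝ) (a : ℕ → ℕ) (k : ℕ) (hk : 1 ≤ k) (hak : 1 ≤ a k) :
    W ρ a (a k) = (∑ j ∈ Finset.range (a k), W ρ a j) / (a k : ℝ) := by
  obtain ⟨m, hm⟩ : ∃ m, a k = m + 1 := ⟨a k - 1, by omega⟩
  rw [hm, W_succ_res ρ a m ⟨k, hk, hm⟩]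
  push_cast
  ring_nf

lemma sum_W_res (ρ : ℝ) (a : ℕ → ℕ) (k : ℕ) (hk : 1 ≤ k) (hak : 1 ≤ a k) :
    ∑ j ∈ Finset.range (a k), W ρ a j = (a k : ℝ) * W ρ a (a k) := by
  rw [W_res_eq ρ a k hk hak]
  field_simp

lemma geom_sum_le_c (ρ : ℝ) (hρ0 : 0 < ρ) (hρ1 : ρ < 1) (N : ℕ) :
    ∑ i ∈ Finset.range N, ρ ^ i ≤ 1 / (1 - ρ) := by
  have h1 : (0 : ℝ) < 1 - ρ := by linarith
  have heq : ∑ i ∈ Finset.range N, ρ ^ i = (1 - ρ ^ N) / (1 - ρ) := by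
    rw [geom_sum_eq (ne_of_lt hρ1)]
    rw [div_eq_div_iff (by linarith) (by linarith)]
    ring
  rw [heq]
  have h2 : 0 ≤ ρ ^ N := pow_nonneg hρ0.le N
  gcongr
  linarith

lemma W_res_step_le (ρ : ℝ) (a : ℕ → ℕ) (hρ0 : 0 < ρ) (hρ1 : ρ < 1)
    (ha1 : 1 ≤ a 1) (hamono : ∀ k, 1 ≤ k → a k < a (k + 1)) (k : ℕ) (hk : 1 ≤ k) :
    W ρ a (a (k + 1)) ≤ (1 / (1 - ρ) + (a k : ℝ)) / (a (k + 1) : ℝ) * W ρ a (a k) := by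
  have hak : 1 ≤ a k := le_trans ha1 (a_le a hamono 1 k le_rfl hk)
  have hak1 : a k < a (k + 1) := hamono k hk
  have hWpos := W_pos ρ a hρ0
  have hsplit : ∑ j ∈ Finset.range (a (k + 1)), W ρ a j
      = ∑ j ∈ Finset.range (a k), W ρ a j
        + ∑ j ∈ Finset.Ico (a k) (a (k + 1)), W ρ a j := by
    simp only [Finset.range_eq_Ico]
    exact (Finset.sum_Ico_consecutive _ (Nat.zero_le _) hak1.le).symm
  have htail : ∑ j ∈ Finset.Ico (a k) (a (k + 1)), W ρ a j
      ≤ 1 / (1 - ρ) * W ρ a (a k) := by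
    rw [Finset.sum_Ico_eq_sum_range]
    have : ∀ i ∈ Finset.range (a (k + 1) - a k), W ρ a (a k + i) = ρ ^ i * W ρ a (a k) := by
      intro i hi
      exact W_no_res ρ a hamono k hk i (by have := Finset.mem_range.mp hi; omega)
    rw [Finset.sum_congr rfl this, ← Finset.sum_mul]
    exact mul_le_mul_of_nonneg_right (geom_sum_le_c ρ hρ0 hρ1 _) (hWpos (a k)).le
  have hres : W ρ a (a (k + 1)) = (∑ j ∈ Finset.range (a (k + 1)), W ρ a j) / (a (k + 1) : ℝ) :=
    W_res_eq ρ a (k + 1) (by omega) (by omega)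
  rw [hres, hsplit, sum_W_res ρ a k hk hak]
  have hakR : (0:ℝ) < (a k : ℝ) := by exact_mod_cast hak
  have hak1R : (0:ℝ) < (a (k+1) : ℝ) := by exact_mod_cast (by omega : 0 < a (k+1))
  rw [div_mul_eq_mul_div, div_le_div_iff₀ hak1R hak1R]
  have h2 := mul_le_mul_of_nonneg_right htail (by positivity : (0:ℝ) ≤ (a (k+1) : ℝ))
  nlinarith [htail]

lemma W_ak_le (ρ : ℝ) (a : ℕ → ℕ) (hρ0 : 0 < ρ) (hρ1 : ρ < 1)
    (ha1 : 1 ≤ a 1) (hamono : ∀ k, 1 ≤ k → a k < a (k + 1)) :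
    ∀ k, 1 ≤ k → W ρ a (a k)
      ≤ (1 - ρ)⁻¹ / ((a 1 : ℝ) * ρ ^ (a 1)) * Real.exp (-(delta ρ a k)) := by
  have h1ρ : (0:ℝ) < 1 - ρ := by linarith
  intro k hk
  induction k, hk using Nat.le_induction with
  | base =>
    have hδ : delta ρ a 1 = -(a 1 : ℝ) * Real.log ρ := by
      simp [delta, u]
    have hexp : Real.exp (-(delta ρ a 1)) = ρ ^ (a 1) := by
      rw [hδ]
      have h2 : -(-(a 1 : ℝ) * Real.log ρ) = (a 1 : ℝ) * Real.log ρ := by ring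
      rw [h2, Real.exp_nat_mul, Real.exp_log hρ0]
    rw [hexp]
    have hW : W ρ a (a 1) = (∑ j ∈ Finset.range (a 1), W ρ a j) / (a 1 : ℝ) :=
      W_res_eq ρ a 1 le_rfl ha1
    have hgeom : ∑ j ∈ Finset.range (a 1), W ρ a j ≤ 1 / (1 - ρ) := by
      have : ∀ j ∈ Finset.range (a 1), W ρ a j = ρ ^ j := fun j hj =>
        W_below_a1 ρ a hamono j (Finset.mem_range.mp hj)
      rw [Finset.sum_congr rfl this]
      exact geom_sum_le_c ρ hρ0 hρ1 _
    have ha1R : (0:ℝ) < (a 1 : ℝ) := by exact_mod_cast ha1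
    have hρa : (0:ℝ) < ρ ^ (a 1) := pow_pos hρ0 _
    rw [hW, div_le_iff₀ ha1R]
    calc (∑ j ∈ Finset.range (a 1), W ρ a j) ≤ 1 / (1 - ρ) := hgeom
      _ = (1 - ρ)⁻¹ / ((a 1 : ℝ) * ρ ^ (a 1)) * ρ ^ (a 1) * (a 1 : ℝ) := by
          field_simp
  | succ k hk ih =>
    have hδ : delta ρ a (k + 1) = delta ρ a k + u ρ a (k + 1) := by
      rw [delta, delta, ← Finset.sum_Icc_succ_top (by omega : 1 ≤ k + 1)]
    obtain ⟨j, rfl⟩ : ∃ j, k = j + 1 := ⟨k - 1, by omega⟩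
    have hu : u ρ a (j + 2) = Real.log (a (j + 2) : ℝ)
        - Real.log (1 / (1 - ρ) + (a (j + 1) : ℝ)) := rfl
    have hA : (0:ℝ) < (a (j + 2) : ℝ) := by
      have : 1 ≤ a (j + 2) := le_trans ha1 (a_le a hamono 1 (j + 2) le_rfl (by omega))
      exact_mod_cast this
    have hB : (0:ℝ) < 1 / (1 - ρ) + (a (j + 1) : ℝ) := by positivity
    have hexp : Real.exp (-(u ρ a (j + 2)))
        = (1 / (1 - ρ) + (a (j + 1) : ℝ)) / (a (j + 2) : ℝ) := by
      rw [hu, neg_sub, Real.exp_sub, Real.exp_log hA, Real.exp_log hB]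
    have hstep := W_res_step_le ρ a hρ0 hρ1 ha1 hamono (j + 1) (by omega)
    have hfac : (0:ℝ) ≤ (1 / (1 - ρ) + (a (j + 1) : ℝ)) / (a (j + 2) : ℝ) := by positivity
    calc W ρ a (a (j + 2)) ≤ (1 / (1 - ρ) + (a (j + 1) : ℝ)) / (a (j + 2) : ℝ) * W ρ a (a (j + 1)) := hstep
      _ ≤ (1 / (1 - ρ) + (a (j + 1) : ℝ)) / (a (j + 2) : ℝ)
          * ((1 - ρ)⁻¹ / ((a 1 : ℝ) * ρ ^ (a 1)) * Real.exp (-(delta ρ a (j + 1)))) :=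
          mul_le_mul_of_nonneg_left ih hfac
      _ = (1 - ρ)⁻¹ / ((a 1 : ℝ) * ρ ^ (a 1)) * Real.exp (-(delta ρ a (j + 2))) := by
          rw [hδ, neg_add, Real.exp_add, hexp]
          ring

lemma iter_prob (P : X → Measure X) (hPmeas : Measurable P)
    (hPprob : ∀ x, IsProbabilityMeasure (P x)) : ∀ m x, IsProbabilityMeasure (iter P m x) := by
  intro m
  induction m with
  | zero => intro x; simp only [iter]; infer_instance
  | succ m ih =>
    intro x
    constructor
    rw [show iter P (m + 1) x = (iter P m x).bind P from rfl,
      Measure.bind_apply MeasurableSet.univ hPmeas.aemeasurable]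
    have h1 : ∀ y, P y Set.univ = 1 := fun y => (hPprob y).measure_univ
    simp only [h1, lintegral_one]
    exact (ih x).measure_univ

lemma integrable_of_abs_le_V
    (P : X → Measure X) (hPmeas : Measurable P)
    (hPprob : ∀ x, IsProbabilityMeasure (P x))
    (π : Measure X)
    (V : X → ℝ) (hV1 : ∀ x, 1 ≤ V x)
    (ρ C0 : ℝ) (hρ0 : 0 < ρ) (hρ1 : ρ < 1) (hC0 : 0 ≤ C0)
    (hA : ∀ f : X → ℝ, Measurable f → (∀ x, |f x| ≤ V x) →
      ∀ (n : ℕ) (x : X),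
        |∫ y, f y ∂(iter P n x) - ∫ y, f y ∂π| ≤ C0 * ρ ^ n * V x)
    (f : X → ℝ) (hf : Measurable f) (hfV : ∀ x, |f x| ≤ V x)
    (m : ℕ) (x : X) : Integrable f (iter P m x) := by
  have hprob : IsProbabilityMeasure (iter P m x) := iter_prob P hPmeas hPprob m x
  set μ := iter P m x with hμ
  set g : ℕ → X → ℝ := fun N y => min |f y| (N : ℝ) with hg
  have hgmeas : ∀ N, Measurable (g N) := fun N => hf.abs.min measurable_const
  have hgnn : ∀ N y, 0 ≤ g N y := fun N y => le_min (abs_nonneg _) (Nat.cast_nonneg N)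
  have hgV : ∀ N y, |g N y| ≤ V y := by
    intro N y
    rw [abs_of_nonneg (hgnn N y)]
    exact le_trans (min_le_left _ _) (hfV y)
  have hgint : ∀ N (ν : Measure X), IsProbabilityMeasure ν → Integrable (g N) ν := by
    intro N ν hν
    refine Integrable.mono' (integrable_const (N : ℝ)) ((hgmeas N).aestronglyMeasurable) ?_
    filter_upwards with y
    rw [Real.norm_eq_abs, abs_of_nonneg (hgnn N y)]
    exact min_le_right _ _
  have hVx : (0:ℝ) ≤ V x := le_trans zero_le_one (hV1 x)
  have hπg : ∀ N, ∫ y, g N y ∂π ≤ (1 + C0) * V x := by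
    intro N
    have h0 := hA (g N) (hgmeas N) (fun y => hgV N y) 0 x
    rw [show iter P 0 x = Measure.dirac x from rfl,
      integral_dirac' _ _ ((hgmeas N).stronglyMeasurable)] at h0
    simp only [pow_zero, mul_one] at h0
    have h1 : g N x ≤ V x := le_trans (min_le_left _ _) (hfV x)
    have h2 := (abs_le.mp h0).1
    nlinarith
  have hμg : ∀ N, ∫ y, g N y ∂μ ≤ (1 + 2 * C0) * V x := by
    intro N
    have h0 := hA (g N) (hgmeas N) (fun y => hgV N y) m x
    have hle := (abs_le.mp h0).2
    have hρm : ρ ^ m ≤ 1 := pow_le_one₀ hρ0.le hρ1.le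
    have h3 := hπg N
    nlinarith [mul_le_mul_of_nonneg_right (mul_le_mul_of_nonneg_left hρm hC0) hVx]
  refine ⟨hf.aestronglyMeasurable, ?_⟩
  rw [hasFiniteIntegral_iff_norm]
  have hmono : ∀ y, Monotone fun N : ℕ => ENNReal.ofReal (g N y) := by
    intro y i j hij
    exact ENNReal.ofReal_le_ofReal (min_le_min le_rfl (Nat.cast_le.mpr hij))
  have hsup : ∀ y, (⨆ N : ℕ, ENNReal.ofReal (g N y)) = ENNReal.ofReal ‖f y‖ := by
    intro y
    apply le_antisymm
    · exact iSup_le fun N => ENNReal.ofReal_le_ofReal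
        (by rw [Real.norm_eq_abs]; exact min_le_left _ _)
    · have hN : |f y| ≤ (⌈|f y|⌉₊ : ℝ) := Nat.le_ceil _
      have heq : g ⌈|f y|⌉₊ y = |f y| := min_eq_left hN
      calc ENNReal.ofReal ‖f y‖ = ENNReal.ofReal (g ⌈|f y|⌉₊ y) := by
            rw [heq, Real.norm_eq_abs]
        _ ≤ ⨆ N : ℕ, ENNReal.ofReal (g N y) := le_iSup (fun N => ENNReal.ofReal (g N y)) ⌈|f y|⌉₊
  calc ∫⁻ y, ENNReal.ofReal ‖f y‖ ∂μ = ∫⁻ y, ⨆ N : ℕ, ENNReal.ofReal (g N y) ∂μ := by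
        simp_rw [hsup]
    _ = ⨆ N : ℕ, ∫⁻ y, ENNReal.ofReal (g N y) ∂μ :=
        lintegral_iSup (fun N => (hgmeas N).ennreal_ofReal)
          (fun i j hij y => hmono y hij)
    _ ≤ ENNReal.ofReal ((1 + 2 * C0) * V x) := by
        apply iSup_le
        intro N
        rw [← ofReal_integral_eq_lintegral_ofReal (hgint N μ hprob)
          (Filter.Eventually.of_forall (hgnn N))]
        exact ENNReal.ofReal_le_ofReal (hμg N)
    _ < ⊤ := ENNReal.ofReal_lt_top

/-- Under Assumption (A) (geometric ergodicity of `P` in `V`-norm, with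
constants `ρ ∈ (0,1)`, `C0 < ∞`), there is a constant `C ∈ (0,∞)` such that for every `k ≥ 1`
and every `n` with `a_k ≤ n < a_{k+1}`, the law `L^(n)` of the chain with resampling from the
past (burn-in `0`) satisfies `⦀L^(n) − π⦀_V ≤ C ρ^{n−a_k} exp(−δ_k)`.  The `V`-norm bound is
expressed by testing against all measurable `f` with `|f|_V ≤ 1`. -/
theorem vnorm_bound_of_resampling_from_past
    (P : X → Measure X) (hPmeas : Measurable P)
    (hPprob : ∀ x, IsProbabilityMeasure (P x))
    (π : Measure X) (hπ : IsProbabilityMeasure π) (hinv : π.bind P = π)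
    (V : X → ℝ) (hVmeas : Measurable V) (hV1 : ∀ x, 1 ≤ V x)
    (ρ C0 : ℝ) (hρ0 : 0 < ρ) (hρ1 : ρ < 1) (hC0 : 0 ≤ C0)
    -- Assumption (A): `⦀P^n − π⦀_V ≤ C0 ρ^n` for all `n ≥ 0`
    (hA : ∀ f : X → ℝ, Measurable f → (∀ x, |f x| ≤ V x) →
      ∀ (n : ℕ) (x : X),
        |∫ y, f y ∂(iter P n x) - ∫ y, f y ∂π| ≤ C0 * ρ ^ n * V x)
    -- the resampling schedule: a strictly increasing sequence of positive integers
    (a : ℕ → ℕ) (ha1 : 1 ≤ a 1) (hamono : ∀ k, 1 ≤ k → a k < a (k + 1))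
    -- the laws `L^(n)(x,·)` of the chain with resampling from the past, burn-in 0
    (L : ℕ → X → Measure X)
    (hL0 : ∀ x, L 0 x = Measure.dirac x)
    (hLstep : ∀ n : ℕ, 1 ≤ n → (¬ ∃ k, 1 ≤ k ∧ a k = n) →
      ∀ x, L n x = (L (n - 1) x).bind P)
    (hLres : ∀ k, 1 ≤ k →
      ∀ x, L (a k) x = ((a k : ℝ≥0∞))⁻¹ • ∑ j ∈ Finset.range (a k), L j x) :
    ∃ C : ℝ, 0 < C ∧
      ∀ k n : ℕ, 1 ≤ k → a k ≤ n → n < a (k + 1) →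
        ∀ f : X → ℝ, Measurable f → (∀ x, |f x| ≤ V x) →
          ∀ x, |∫ y, f y ∂(L n x) - ∫ y, f y ∂π| ≤
            C * ρ ^ (n - a k) * Real.exp (-(delta ρ a k)) * V x := by
  classical
  have hint : ∀ f : X → ℝ, Measurable f → (∀ x, |f x| ≤ V x) →
      ∀ (m : ℕ) (x : X), Integrable f (iter P m x) :=
    fun f hf hfV m x =>
      integrable_of_abs_le_V P hPmeas hPprob π V hV1 ρ C0 hρ0 hρ1 hC0 hA f hf hfV m x
  -- representation of `L j` as convex combination of the `iter P m`
  have hrep : ∀ n : ℕ, ∃ w : ℕ → ℕ → ℝ≥0, ∀ j, j ≤ n →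
      (∀ m, j < m → w j m = 0) ∧
      (∑ m ∈ Finset.range (j + 1), w j m = 1) ∧
      (∀ x, L j x = ∑ m ∈ Finset.range (j + 1), (w j m : ℝ≥0∞) • iter P m x) ∧
      (∑ m ∈ Finset.range (j + 1), (w j m : ℝ) * ρ ^ m = W ρ a j) := by
    intro n
    induction n with
    | zero =>
      refine ⟨fun _ m => if m = 0 then 1 else 0, ?_⟩
      intro j hj
      obtain rfl : j = 0 := Nat.le_zero.mp hj
      refine ⟨fun m hm => if_neg (by omega), by simp, fun x => ?_, by simp [W_zero]⟩
      simp [hL0 x, iter]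
    | succ n ih =>
      obtain ⟨w, hw⟩ := ih
      by_cases hres : ∃ k, 1 ≤ k ∧ a k = n + 1
      · -- resampling step
        have hnz : ((n + 1 : ℕ) : ℝ≥0) ≠ 0 := Nat.cast_ne_zero.mpr (by omega)
        set r : ℕ → ℝ≥0 :=
          fun m => (∑ j ∈ Finset.range (n + 1), w j m) / ((n + 1 : ℕ) : ℝ≥0) with hr
        refine ⟨Function.update w (n + 1) r, ?_⟩
        intro j hj
        rcases eq_or_lt_of_le hj with rfl | hj'
        · -- the new row
          obtain ⟨k, hk1, hak⟩ := id hres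
          have hrowsum : ∀ j, j ≤ n → ∑ m ∈ Finset.range (n + 2), w j m = 1 := by
            intro j hj
            rw [← (hw j hj).2.1]
            symm
            apply Finset.sum_subset (Finset.range_subset_range.mpr (by omega))
            intro m _ hm
            exact (hw j hj).1 m (by simp only [Finset.mem_range] at hm; omega)
          have hrowrep : ∀ j, j ≤ n → ∀ x,
              L j x = ∑ m ∈ Finset.range (n + 2), (w j m : ℝ≥0∞) • iter P m x := by
            intro j hj x
            rw [(hw j hj).2.2.1 x]
            apply Finset.sum_subset (Finset.range_subset_range.mpr (by omega))
            intro m _ hm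
            rw [(hw j hj).1 m (by simp only [Finset.mem_range] at hm; omega)]
            simp
          have hrowrho : ∀ j, j ≤ n →
              ∑ m ∈ Finset.range (n + 2), (w j m : ℝ) * ρ ^ m = W ρ a j := by
            intro j hj
            rw [← (hw j hj).2.2.2]
            symm
            apply Finset.sum_subset (Finset.range_subset_range.mpr (by omega))
            intro m _ hm
            rw [(hw j hj).1 m (by simp only [Finset.mem_range] at hm; omega)]
            simp
          simp only [Function.update_self]
          refine ⟨?_, ?_, ?_, ?_⟩
          · intro m hm
            have hz : ∑ j ∈ Finset.range (n + 1), w j m = 0 :=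
              Finset.sum_eq_zero fun j hj => by
                have hjn : j < n + 1 := Finset.mem_range.mp hj
                exact (hw j (by omega)).1 m (by omega)
            show (∑ j ∈ Finset.range (n + 1), w j m) / ((n + 1 : ℕ) : ℝ≥0) = 0
            rw [hz, zero_div]
          · show ∑ m ∈ Finset.range (n + 2),
              (∑ j ∈ Finset.range (n + 1), w j m) / ((n + 1 : ℕ) : ℝ≥0) = 1
            rw [← Finset.sum_div, Finset.sum_comm]
            rw [Finset.sum_congr rfl
              (fun j hj => hrowsum j (by simp only [Finset.mem_range] at hj; omega))]
            rw [Finset.sum_const, Finset.card_range, nsmul_eq_mul, mul_one, div_self hnz]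
          · intro x
            rw [← hak, hLres k hk1 x, hak]
            have h1 : ∑ j ∈ Finset.range (n + 1), L j x
                = ∑ m ∈ Finset.range (n + 2),
                    (∑ j ∈ Finset.range (n + 1), (w j m : ℝ≥0∞)) • iter P m x := by
              rw [Finset.sum_congr rfl
                (fun j hj => hrowrep j (by simp only [Finset.mem_range] at hj; omega) x)]
              rw [Finset.sum_comm]
              exact Finset.sum_congr rfl fun m _ => (Finset.sum_smul).symm
            rw [h1, Finset.smul_sum]
            refine Finset.sum_congr rfl fun m _ => ?_
            rw [smul_smul]
            congr 1
            show ((n + 1 : ℕ) : ℝ≥0∞)⁻¹ * (∑ j ∈ Finset.range (n + 1), ((w j m : ℝ≥0) : ℝ≥0∞))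
              = (((∑ j ∈ Finset.range (n + 1), w j m) / ((n + 1 : ℕ) : ℝ≥0) : ℝ≥0) : ℝ≥0∞)
            rw [ENNReal.coe_div hnz, ENNReal.coe_finset_sum, ENNReal.div_eq_inv_mul,
              ENNReal.coe_natCast]
          · show ∑ m ∈ Finset.range (n + 2),
                (((∑ j ∈ Finset.range (n + 1), w j m) / ((n + 1 : ℕ) : ℝ≥0) : ℝ≥0) : ℝ) * ρ ^ m
              = W ρ a (n + 1)
            have hcast : ∀ m, (((∑ j ∈ Finset.range (n + 1), w j m) / ((n + 1 : ℕ) : ℝ≥0) : ℝ≥0) : ℝ)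
                = (∑ j ∈ Finset.range (n + 1), (w j m : ℝ)) / ((n + 1 : ℕ) : ℝ) := by
              intro m; push_cast; ring
            calc ∑ m ∈ Finset.range (n + 2),
                (((∑ j ∈ Finset.range (n + 1), w j m) / ((n + 1 : ℕ) : ℝ≥0) : ℝ≥0) : ℝ) * ρ ^ m
                = (∑ m ∈ Finset.range (n + 2),
                    ∑ j ∈ Finset.range (n + 1), (w j m : ℝ) * ρ ^ m) / ((n + 1 : ℕ) : ℝ) := by
                  rw [Finset.sum_div]
                  refine Finset.sum_congr rfl fun m _ => ?_
                  rw [hcast m, div_mul_eq_mul_div, Finset.sum_mul]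
              _ = (∑ j ∈ Finset.range (n + 1), W ρ a j) / ((n + 1 : ℕ) : ℝ) := by
                  rw [Finset.sum_comm]
                  rw [Finset.sum_congr rfl
                    (fun j hj => hrowrho j (by simp only [Finset.mem_range] at hj; omega))]
              _ = W ρ a (n + 1) := by
                  rw [W_succ_res ρ a n hres]
                  push_cast
                  ring
        · -- old rows
          have hj2 : j ≤ n := by omega
          have hne : j ≠ n + 1 := by omega
          simp only [Function.update_of_ne hne]
          exact hw j hj2
      · -- plain Markov step
        set r : ℕ → ℝ≥0 := fun m => if m = 0 then 0 else w n (m - 1) with hr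
        refine ⟨Function.update w (n + 1) r, ?_⟩
        intro j hj
        rcases eq_or_lt_of_le hj with rfl | hj'
        · simp only [Function.update_self]
          have h0 : r 0 = 0 := rfl
          have hsucc : ∀ i, r (i + 1) = w n i := fun i => rfl
          refine ⟨?_, ?_, ?_, ?_⟩
          · intro m hm
            obtain ⟨m', rfl⟩ : ∃ m', m = m' + 1 := ⟨m - 1, by omega⟩
            rw [hsucc m']
            exact (hw n le_rfl).1 m' (by omega)
          · rw [Finset.sum_range_succ']
            simp only [hsucc, h0, add_zero]
            exact (hw n le_rfl).2.1
          · intro x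
            have hstep := hLstep (n + 1) (by omega) hres x
            simp only [Nat.add_sub_cancel] at hstep
            rw [hstep, (hw n le_rfl).2.2.1 x]
            ext s hs
            rw [Measure.bind_apply hs hPmeas.aemeasurable, lintegral_finset_sum_measure,
              Measure.finset_sum_apply]
            conv_rhs => rw [Finset.sum_range_succ']
            simp only [lintegral_smul_measure, Measure.smul_apply, smul_eq_mul, hsucc, h0,
              ENNReal.coe_zero, zero_mul, add_zero]
            refine Finset.sum_congr rfl fun m _ => ?_
            congr 1
            rw [show iter P (m + 1) x = (iter P m x).bind P from rfl,
              Measure.bind_apply hs hPmeas.aemeasurable]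
          · rw [Finset.sum_range_succ']
            simp only [hsucc, h0, NNReal.coe_zero, zero_mul, add_zero]
            rw [W_succ_plain ρ a n hres, ← (hw n le_rfl).2.2.2, Finset.mul_sum]
            exact Finset.sum_congr rfl fun i _ => by ring
        · have hj2 : j ≤ n := by omega
          have hne : j ≠ n + 1 := by omega
          simp only [Function.update_of_ne hne]
          exact hw j hj2
  -- assemble
  set K : ℝ := (1 - ρ)⁻¹ / ((a 1 : ℝ) * ρ ^ (a 1)) with hK
  have h1ρ : (0:ℝ) < 1 - ρ := by linarith
  have hKpos : 0 < K := by
    apply div_pos (inv_pos.mpr h1ρ)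
    exact mul_pos (by exact_mod_cast ha1 : (0:ℝ) < (a 1 : ℝ)) (pow_pos hρ0 _)
  refine ⟨C0 * K + 1, by positivity, ?_⟩
  intro k n hk hkn hnk f hf hfV x
  obtain ⟨w, hw⟩ := hrep n
  obtain ⟨hvan, hsum, hrepr, hrho⟩ := hw n le_rfl
  have hVx : (0:ℝ) ≤ V x := le_trans zero_le_one (hV1 x)
  have hIint : ∀ m ∈ Finset.range (n + 1), Integrable f ((w n m : ℝ≥0∞) • iter P m x) :=
    fun m _ => (hint f hf hfV m x).smul_measure ENNReal.coe_ne_top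
  have hInt : ∫ y, f y ∂(L n x)
      = ∑ m ∈ Finset.range (n + 1), (w n m : ℝ) * ∫ y, f y ∂(iter P m x) := by
    rw [hrepr x, integral_finset_sum_measure hIint]
    refine Finset.sum_congr rfl fun m _ => ?_
    rw [integral_smul_measure, ENNReal.coe_toReal, smul_eq_mul]
  have hsum1 : ∑ m ∈ Finset.range (n + 1), (w n m : ℝ) = 1 := by exact_mod_cast hsum
  have hdiff : ∫ y, f y ∂(L n x) - ∫ y, f y ∂π
      = ∑ m ∈ Finset.range (n + 1),
          (w n m : ℝ) * (∫ y, f y ∂(iter P m x) - ∫ y, f y ∂π) := by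
    simp only [mul_sub]
    rw [Finset.sum_sub_distrib, ← Finset.sum_mul, hsum1, one_mul, hInt]
  have hbound : |∫ y, f y ∂(L n x) - ∫ y, f y ∂π| ≤ C0 * V x * W ρ a n := by
    rw [hdiff]
    calc |∑ m ∈ Finset.range (n + 1),
            (w n m : ℝ) * (∫ y, f y ∂(iter P m x) - ∫ y, f y ∂π)|
        ≤ ∑ m ∈ Finset.range (n + 1),
            |(w n m : ℝ) * (∫ y, f y ∂(iter P m x) - ∫ y, f y ∂π)| :=
          Finset.abs_sum_le_sum_abs _ _
      _ ≤ ∑ m ∈ Finset.range (n + 1), (w n m : ℝ) * (C0 * ρ ^ m * V x) := by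
          refine Finset.sum_le_sum fun m _ => ?_
          rw [abs_mul, abs_of_nonneg (by positivity : (0:ℝ) ≤ (w n m : ℝ))]
          exact mul_le_mul_of_nonneg_left (hA f hf hfV m x) (by positivity)
      _ = C0 * V x * ∑ m ∈ Finset.range (n + 1), (w n m : ℝ) * ρ ^ m := by
          rw [Finset.mul_sum]
          exact Finset.sum_congr rfl fun m _ => by ring
      _ = C0 * V x * W ρ a n := by rw [hrho]
  have hd : a k + (n - a k) = n := by omega
  have hWn : W ρ a n = ρ ^ (n - a k) * W ρ a (a k) := by
    have h := W_no_res ρ a hamono k hk (n - a k) (by omega)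
    rw [hd] at h
    exact h
  have hWak := W_ak_le ρ a hρ0 hρ1 ha1 hamono k hk
  have hfinal : C0 * V x * W ρ a n
      ≤ (C0 * K + 1) * ρ ^ (n - a k) * Real.exp (-(delta ρ a k)) * V x := by
    rw [hWn]
    have h1 : C0 * V x * (ρ ^ (n - a k) * W ρ a (a k))
        ≤ C0 * V x * (ρ ^ (n - a k) * (K * Real.exp (-(delta ρ a k)))) := by
      apply mul_le_mul_of_nonneg_left _ (mul_nonneg hC0 hVx)
      exact mul_le_mul_of_nonneg_left hWak (pow_nonneg hρ0.le _)
    refine le_trans h1 ?_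
    have h2 : (0:ℝ) ≤ ρ ^ (n - a k) * Real.exp (-(delta ρ a k)) * V x := by positivity
    nlinarith [h2]
  linarith [hbound, hfinal]


end ResamplingFromThePast
end

section
/- Let ρ ∈ (0,1), c = 1/(1−ρ), b1 ≥ 0 an integer and α > 1, and define the resampling schedule a_k = b1 + ⌈k^α⌉ for k ≥ 1. Then the sequence δ_n = −a_1 log ρ + Σ_{k=2}^n [log(a_k) − log(c + a_{k−1})] tends to +∞ as n → ∞. -/
open Filter

private lemma telescope_log (L : ℕ → ℝ) :
    ∀ n : ℕ, 1 ≤ n → ∑ k ∈ Finset.Icc 2 n, (L k - L (k - 1)) = L n - L 1 := by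
  intro n hn
  induction n with
  | zero => omega
  | succ m ih =>
    rcases Nat.eq_or_lt_of_le hn with h | h
    · simp [← h]
    · have hm : 1 ≤ m := by omega
      rw [← Finset.insert_Icc_right_eq_Icc_add_one (by omega : 2 ≤ m + 1),
        Finset.sum_insert (by simp), ih hm]
      have h1 : m + 1 - 1 = m := rfl
      rw [h1]; ring

/-- Let `ρ ∈ (0,1)`, `c = 1/(1−ρ)`, `b1 ≥ 0` an integer and `α > 1`, and
define the resampling schedule `a_k = b1 + ⌈k^α⌉` for `k ≥ 1`.  Then
`δ_n = −a_1 log ρ + Σ_{k=2}^n [log(a_k) − log(c + a_{k−1})]` tends to `+∞` as `n → ∞`. -/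
theorem delta_tendsto_atTop_of_polynomial_schedule
    (ρ : ℝ) (hρ0 : 0 < ρ) (hρ1 : ρ < 1)
    (b1 : ℕ) (α : ℝ) (hα : 1 < α)
    (a : ℕ → ℕ) (ha : ∀ k : ℕ, a k = b1 + ⌈(k : ℝ) ^ α⌉₊) :
    Tendsto
      (fun n : ℕ => -(a 1 : ℝ) * Real.log ρ +
        ∑ k ∈ Finset.Icc 2 n,
          (Real.log (a k : ℝ) - Real.log (1 / (1 - ρ) + (a (k - 1) : ℝ))))
      atTop atTop := by
  set c : ℝ := 1 / (1 - ρ) with hc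
  have hc0 : 0 < c := by
    apply div_pos one_pos; linarith
  -- basic facts about a
  have hpow : ∀ j : ℕ, 1 ≤ j → ((j : ℝ)) ^ α ≤ (a j : ℝ) := by
    intro j hj
    rw [ha j]
    push_cast
    have := Nat.le_ceil ((j : ℝ) ^ α)
    have hb : (0:ℝ) ≤ (b1:ℝ) := by positivity
    linarith
  have hone : ∀ j : ℕ, 1 ≤ j → (1 : ℝ) ≤ (a j : ℝ) := by
    intro j hj
    refine le_trans ?_ (hpow j hj)
    apply Real.one_le_rpow (by exact_mod_cast hj) (by linarith)
  have hnat : ∀ n : ℕ, 1 ≤ n → n ≤ a n := by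
    intro n hn
    have h1 : (n : ℝ) ≤ (n : ℝ) ^ α := by
      calc (n:ℝ) = (n:ℝ) ^ (1:ℝ) := by rw [Real.rpow_one]
      _ ≤ (n:ℝ) ^ α := Real.rpow_le_rpow_of_exponent_le (by exact_mod_cast hn) hα.le
    have := le_trans h1 (hpow n hn)
    exact_mod_cast this
  -- summable dominating series
  set g : ℕ → ℝ := fun j => c * (((j : ℝ)) ^ α)⁻¹ with hg
  have hgsum : Summable g := (Real.summable_nat_rpow_inv.mpr hα).mul_left c
  have hgnn : ∀ j, 0 ≤ g j := fun j => by positivity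
  set S : ℝ := ∑' j, g j with hS
  -- lower bound for δ n when 1 ≤ n
  have key : ∀ n : ℕ, 1 ≤ n →
      (-(a 1 : ℝ) * Real.log ρ - Real.log (a 1) - S) + Real.log (a n) ≤
      -(a 1 : ℝ) * Real.log ρ +
        ∑ k ∈ Finset.Icc 2 n,
          (Real.log (a k : ℝ) - Real.log (c + (a (k - 1) : ℝ))) := by
    intro n hn
    have hterm : ∀ k ∈ Finset.Icc 2 n,
        (Real.log (a k : ℝ) - Real.log (a (k-1) : ℝ)) - c / (a (k-1) : ℝ) ≤
        Real.log (a k : ℝ) - Real.log (c + (a (k - 1) : ℝ)) := by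
      intro k hk
      simp only [Finset.mem_Icc] at hk
      have hx1 : (1 : ℝ) ≤ (a (k-1) : ℝ) := hone _ (by omega)
      have hx0 : (0 : ℝ) < (a (k-1) : ℝ) := by linarith
      have : Real.log (c + (a (k-1) : ℝ)) ≤ Real.log (a (k-1) : ℝ) + c / (a (k-1) : ℝ) := by
        have h1 : Real.log (c + (a (k-1) : ℝ)) - Real.log (a (k-1) : ℝ)
            = Real.log ((c + (a (k-1) : ℝ)) / (a (k-1) : ℝ)) := by
          rw [Real.log_div (by positivity) (by positivity)]
        have h2 : Real.log ((c + (a (k-1) : ℝ)) / (a (k-1) : ℝ)) ≤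
            (c + (a (k-1) : ℝ)) / (a (k-1) : ℝ) - 1 :=
          Real.log_le_sub_one_of_pos (by positivity)
        have h3 : (c + (a (k-1) : ℝ)) / (a (k-1) : ℝ) - 1 = c / (a (k-1) : ℝ) := by
          field_simp; ring
        linarith [h1 ▸ h2, h3 ▸ (le_refl ((c + (a (k-1) : ℝ)) / (a (k-1) : ℝ) - 1))]
      linarith
    have hsum1 : ∑ k ∈ Finset.Icc 2 n,
        ((Real.log (a k : ℝ) - Real.log (a (k-1) : ℝ)) - c / (a (k-1) : ℝ)) ≤
        ∑ k ∈ Finset.Icc 2 n,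
          (Real.log (a k : ℝ) - Real.log (c + (a (k - 1) : ℝ))) :=
      Finset.sum_le_sum hterm
    have htel : ∑ k ∈ Finset.Icc 2 n,
        (Real.log (a k : ℝ) - Real.log (a (k-1) : ℝ)) =
        Real.log (a n : ℝ) - Real.log (a 1 : ℝ) :=
      telescope_log (fun k => Real.log (a k : ℝ)) n hn
    have hcsum : ∑ k ∈ Finset.Icc 2 n, c / (a (k-1) : ℝ) ≤ S := by
      have hre : ∑ k ∈ Finset.Icc 2 n, c / (a (k-1) : ℝ)
          = ∑ j ∈ Finset.Icc 1 (n-1), c / (a j : ℝ) := by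
        refine Finset.sum_nbij' (fun k => k - 1) (fun j => j + 1) ?_ ?_ ?_ ?_ ?_
        · intro k hk; simp only [Finset.mem_Icc] at hk ⊢; omega
        · intro k hk; simp only [Finset.mem_Icc] at hk ⊢; omega
        · intro k hk; simp only [Finset.mem_Icc] at hk ⊢; omega
        · intro k hk; simp only [Finset.mem_Icc] at hk ⊢; omega
        · intro k hk; rfl
      rw [hre]
      have hle : ∀ j ∈ Finset.Icc 1 (n-1), c / (a j : ℝ) ≤ g j := by
        intro j hj
        simp only [Finset.mem_Icc] at hj
        have hj1 : 1 ≤ j := hj.1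
        have hp : (0:ℝ) < ((j:ℝ)) ^ α := by
          have : (0:ℝ) < (j:ℝ) := by exact_mod_cast hj1
          positivity
        have := hpow j hj1
        rw [hg]
        simp only
        rw [div_eq_mul_inv]
        apply mul_le_mul_of_nonneg_left _ hc0.le
        exact inv_anti₀ hp this
      calc ∑ j ∈ Finset.Icc 1 (n-1), c / (a j : ℝ) ≤ ∑ j ∈ Finset.Icc 1 (n-1), g j :=
            Finset.sum_le_sum hle
        _ ≤ S := Summable.sum_le_tsum _ (fun j _ => hgnn j) hgsum
    rw [Finset.sum_sub_distrib, htel] at hsum1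
    linarith
  -- the lower bound tends to atTop
  have hA : Tendsto a atTop atTop := by
    apply tendsto_atTop_mono' atTop _ tendsto_id
    filter_upwards [eventually_ge_atTop 1] with n hn using hnat n hn
  have hlog : Tendsto (fun n : ℕ => Real.log (a n : ℝ)) atTop atTop :=
    Real.tendsto_log_atTop.comp (tendsto_natCast_atTop_atTop.comp hA)
  have hlb : Tendsto (fun n : ℕ =>
      (-(a 1 : ℝ) * Real.log ρ - Real.log (a 1) - S) + Real.log (a n : ℝ)) atTop atTop :=
    tendsto_atTop_add_const_left _ _ hlog
  refine tendsto_atTop_mono' atTop ?_ hlb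
  filter_upwards [eventually_ge_atTop 1] with n hn using key n hn
end

section
/- Let ρ ∈ (0,1), c = 1/(1−ρ), b1 ≥ 0 an integer and b2 an integer with b2 > c, and define the resampling schedule a_k = b1 + b2 k for k ≥ 1. Then the sequence δ_n = −a_1 log ρ + Σ_{k=2}^n [log(a_k) − log(c + a_{k−1})] tends to +∞ as n → ∞. -/
open Filter

/-- Let `ρ ∈ (0,1)`, `c = 1/(1−ρ)`, `b1 ≥ 0` an integer and `b2` an integer
with `b2 > c`, and define the resampling schedule `a_k = b1 + b2 k` for `k ≥ 1`.  Then
`δ_n = −a_1 log ρ + Σ_{k=2}^n [log(a_k) − log(c + a_{k−1})]` tends to `+∞` as `n → ∞`. -/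
theorem delta_tendsto_atTop_of_linear_schedule
    (ρ : ℝ) (hρ0 : 0 < ρ) (hρ1 : ρ < 1)
    (b1 b2 : ℕ) (hb2 : 1 / (1 - ρ) < (b2 : ℝ))
    (a : ℕ → ℕ) (ha : ∀ k : ℕ, a k = b1 + b2 * k) :
    Tendsto
      (fun n : ℕ => -(a 1 : ℝ) * Real.log ρ +
        ∑ k ∈ Finset.Icc 2 n,
          (Real.log (a k : ℝ) - Real.log (1 / (1 - ρ) + (a (k - 1) : ℝ))))
      atTop atTop := by
  have h1ρ : (0:ℝ) < 1 - ρ := by linarith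
  set c : ℝ := 1 / (1 - ρ) with hc_def
  have hc0 : 0 < c := by positivity
  have hb2pos : (0:ℝ) < b2 := lt_trans hc0 hb2
  have hb2nat : 1 ≤ b2 := by exact_mod_cast hb2pos
  have hden : (0:ℝ) < (b1:ℝ) + b2 := add_pos_of_nonneg_of_pos (Nat.cast_nonneg _) hb2pos
  set D : ℝ := ((b2:ℝ) - c) / ((b1:ℝ) + b2) with hD_def
  have hD0 : 0 < D := div_pos (by linarith) hden
  set K : ℝ := -(a 1 : ℝ) * Real.log ρ with hK_def
  -- termwise lower bound
  have key : ∀ k : ℕ, 2 ≤ k →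
      D * (1 / k) ≤ Real.log (a k : ℝ) - Real.log (c + (a (k - 1) : ℝ)) := by
    intro k hk
    have hk1 : 1 ≤ k := le_trans (by norm_num) hk
    have hkR : (2:ℝ) ≤ (k:ℝ) := by exact_mod_cast hk
    have hak : (a k : ℝ) = (b1:ℝ) + b2 * k := by rw [ha k]; push_cast; ring
    have hak1 : (a (k-1) : ℝ) = (b1:ℝ) + b2 * ((k:ℝ) - 1) := by
      rw [ha (k-1)]
      push_cast [Nat.cast_sub hk1]
      ring
    set x : ℝ := (b1:ℝ) + b2 * k with hx_def
    set y : ℝ := c + ((b1:ℝ) + b2 * ((k:ℝ) - 1)) with hy_def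
    have hx0 : 0 < x := by nlinarith
    have hy0 : 0 < y := by nlinarith
    have hlog : Real.log y - Real.log x ≤ y / x - 1 := by
      have := Real.log_le_sub_one_of_pos (show 0 < y / x from div_pos hy0 hx0)
      rwa [Real.log_div (ne_of_gt hy0) (ne_of_gt hx0)] at this
    have h1 : 1 - y / x ≤ Real.log x - Real.log y := by linarith
    have hxy : 1 - y / x = ((b2:ℝ) - c) / x := by
      field_simp
      ring
    have h2 : D * (1 / k) ≤ ((b2:ℝ) - c) / x := by
      rw [hD_def, div_mul_eq_mul_div, mul_one_div, div_div]
      apply div_le_div_of_nonneg_left (by linarith) hx0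
      have hb1k : (b1:ℝ) ≤ (b1:ℝ) * k := le_mul_of_one_le_right (Nat.cast_nonneg _) (by linarith)
      nlinarith
    calc D * (1 / k) ≤ ((b2:ℝ) - c) / x := h2
      _ = 1 - y / x := hxy.symm
      _ ≤ Real.log x - Real.log y := h1
      _ = Real.log (a k : ℝ) - Real.log (c + (a (k-1) : ℝ)) := by rw [hak, hak1]
  -- harmonic divergence
  have hG : Tendsto (fun n : ℕ => ∑ i ∈ Finset.range n, (1:ℝ)/i) atTop atTop := by
    have hnn : ∀ i : ℕ, 0 ≤ (1:ℝ)/i := fun i => by positivity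
    have := (not_summable_iff_tendsto_nat_atTop_of_nonneg hnn).mp
      Real.not_summable_one_div_natCast
    exact this
  have hsum_eq : ∀ n : ℕ, 1 ≤ n →
      ∑ i ∈ Finset.range (n+1), (1:ℝ)/i = 1 + ∑ k ∈ Finset.Icc 2 n, (1:ℝ)/k := by
    intro n hn
    induction n with
    | zero => omega
    | succ m ih =>
      rcases Nat.eq_or_lt_of_le hn with h | h
      · have hm : m = 0 := by omega
        subst hm
        norm_num
      · have hm : 1 ≤ m := by omega
        rw [Finset.sum_range_succ, ih hm, Finset.sum_Icc_succ_top (by omega : 2 ≤ m + 1)]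
        ring
  -- the minorant tends to infinity
  have hmin : Tendsto (fun n : ℕ => K + D * ((∑ i ∈ Finset.range (n+1), (1:ℝ)/i) - 1))
      atTop atTop := by
    apply tendsto_atTop_add_const_left
    apply Tendsto.const_mul_atTop hD0
    apply tendsto_atTop_add_const_right
    exact hG.comp (tendsto_add_atTop_nat 1)
  apply tendsto_atTop_mono' _ _ hmin
  filter_upwards [eventually_ge_atTop 1] with n hn
  have hle : D * ((∑ i ∈ Finset.range (n+1), (1:ℝ)/i) - 1)
      ≤ ∑ k ∈ Finset.Icc 2 n, (Real.log (a k : ℝ) - Real.log (c + (a (k-1) : ℝ))) := by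
    rw [hsum_eq n hn]
    have : D * (1 + (∑ k ∈ Finset.Icc 2 n, (1:ℝ)/k) - 1)
        = ∑ k ∈ Finset.Icc 2 n, D * (1/k) := by
      rw [add_sub_cancel_left, Finset.mul_sum]
    rw [this]
    apply Finset.sum_le_sum
    intro k hk
    exact key k (Finset.mem_Icc.mp hk).1
  simpa [hK_def] using add_le_add_left hle K
end
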